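/- Let (R, m) be a local Frobenius k-algebra with R/m ≅ k, with form B whose Nakayama automorphism σ satisfies σⁿ = I_a for a unit a, and suppose char k does not divide n. Then there exists a unit u of R such that the form B'(r,s) := B(r,su) has Nakayama automorphism σ' with (σ')ⁿ = Id. -/

import Mathlib

open Polynomial

private lemma aux_pow_expand {S : Type*} [CommRing S] (v d : S) (m : ℕ) :
    ∃ r : S, (v + d) ^ (m + 1) = v ^ (m + 1) + (m + 1) * v ^ m * d + d ^ 2 * r := by
  induction m with
  | zero => exact ⟨0, by ring⟩
  | succ m ih =>
    obtain ⟨r, hr⟩ := ih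
    refine ⟨r * v + r * d + (m + 1) * v ^ m, ?_⟩
    rw [pow_succ, hr]; push_cast; ring

private lemma aux_root_unique {S : Type*} [CommRing S] {n : ℕ} (hnu : IsUnit (n : S))
    {v w : S} (hv : IsUnit v) (hd : IsNilpotent (w - v)) (h : w ^ n = v ^ n)
    (hn0 : n ≠ 0) : w = v := by
  obtain ⟨m, rfl⟩ : ∃ m, n = m + 1 :=
    ⟨n - 1, (Nat.succ_pred_eq_of_pos (Nat.pos_of_ne_zero hn0)).symm⟩
  set d := w - v with hdd
  obtain ⟨r, hr⟩ := aux_pow_expand v d m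
  have hw : w = v + d := by rw [hdd]; ring
  have h0 : d * ((m + 1 : S) * v ^ m + d * r) = 0 := by
    rw [hw, hr] at h
    push_cast at h ⊢
    linear_combination h
  have hq : IsUnit ((m + 1 : S) * v ^ m + d * r) := by
    have h1 : IsUnit ((m + 1 : S) * v ^ m) := by
      refine IsUnit.mul ?_ (hv.pow m)
      push_cast at hnu; exact hnu
    exact ((Commute.all d r).isNilpotent_mul_right hd).isUnit_add_left_of_commute h1 (Commute.all _ _)
  have hd0 : d = 0 := by
    obtain ⟨q, hq'⟩ := hq
    have h2 := congrArg (· * (↑q⁻¹ : S)) h0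
    simpa [← hq', mul_assoc] using h2
  rw [← sub_eq_zero]; exact hd0

private lemma aux_polyroot (k : Type*) [Field k] {n : ℕ} (hchar : (n : k) ≠ 0)
    (E : ℕ) : ∃ P : k[X], P.coeff 0 = 1 ∧ (X : k[X]) ^ (E + 1) ∣ P ^ n - (1 + X) := by
  have hn0 : n ≠ 0 := fun h => hchar (by simp [h])
  obtain ⟨m, rfl⟩ : ∃ m, n = m + 1 :=
    ⟨n - 1, (Nat.succ_pred_eq_of_pos (Nat.pos_of_ne_zero hn0)).symm⟩
  induction E with
  | zero =>
    refine ⟨1, by simp, ?_⟩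
    simpa using (dvd_neg.2 dvd_rfl : (X : k[X]) ∣ -X)
  | succ E ih =>
    obtain ⟨P, h0, g, hg⟩ := ih
    set β : k := ((m : k) + 1)⁻¹ * g.coeff 0 with hβ
    obtain ⟨r, hr⟩ := aux_pow_expand (1 : k[X]) (-(C β) * X ^ (E + 1)) m
    refine ⟨P * (1 - C β * X ^ (E + 1)), ?_, ?_⟩
    · simp [mul_coeff_zero, h0, coeff_X_pow]
    · have key : (P * (1 - C β * X ^ (E + 1))) ^ (m + 1) - (1 + X)
          = X ^ (E + 1) * (g - ((m : k[X]) + 1) * C β * P ^ (m + 1))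
            + X ^ (E + 1) * X ^ (E + 1) * (C β ^ 2 * r * P ^ (m + 1)) := by
        have e1 : (1 - C β * X ^ (E + 1) : k[X]) = 1 + -(C β) * X ^ (E + 1) := by ring
        rw [mul_pow, e1, hr]
        push_cast
        linear_combination hg
      rw [key]
      apply dvd_add
      · rw [pow_succ]
        refine mul_dvd_mul dvd_rfl (X_dvd_iff.2 ?_)
        have hPc : P.eval 0 = 1 := by rw [← coeff_zero_eq_eval_zero]; exact h0
        have hmk : ((m : k) + 1) ≠ 0 := by push_cast at hchar; exact hchar
        simp [coeff_zero_eq_eval_zero, hPc, hβ]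
        field_simp
        simp
      · rw [← pow_add]
        refine dvd_mul_of_dvd_left (pow_dvd_pow X (by omega)) _

private lemma aux_nilpotent {k : Type*} [Field k] {R : Type*} [Ring R] [Algebra k R]
    [FiniteDimensional k R] (ε : R →ₐ[k] k) (hlocal : ∀ y : R, IsUnit y ↔ ε y ≠ 0)
    (x : R) (hx : ε x = 0) : IsNilpotent x := by
  have hint : IsIntegral k x := Algebra.IsIntegral.isIntegral x
  have hp0 : minpoly k x ≠ 0 := minpoly.ne_zero hint
  obtain ⟨q, hq, hndvd⟩ := (minpoly k x).exists_eq_pow_rootMultiplicity_mul_and_not_dvd hp0 0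
  rw [map_zero, sub_zero] at hq hndvd
  have heval : Polynomial.aeval x (minpoly k x) = 0 := minpoly.aeval k x
  rw [hq, map_mul, map_pow, Polynomial.aeval_X] at heval
  have hεq : ε (Polynomial.aeval x q) ≠ 0 := by
    rw [← Polynomial.aeval_algHom_apply ε x q, hx]
    have : (Polynomial.aeval (0 : k)) q = q.coeff 0 := by
      rw [Polynomial.aeval_def, Polynomial.eval₂_at_zero]; simp
    rw [this]
    intro h0
    exact hndvd (Polynomial.X_dvd_iff.2 h0)
  obtain ⟨w, hw⟩ := ((hlocal _).2 hεq).exists_right_inv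
  refine ⟨(minpoly k x).rootMultiplicity 0, ?_⟩
  calc x ^ (minpoly k x).rootMultiplicity 0
      = x ^ (minpoly k x).rootMultiplicity 0 * (Polynomial.aeval x q * w) := by rw [hw, mul_one]
    _ = (x ^ (minpoly k x).rootMultiplicity 0 * Polynomial.aeval x q) * w := by rw [mul_assoc]
    _ = 0 := by rw [heval, zero_mul]

private lemma aux_inv_fixed {R : Type*} [Ring R] (σ : R ≃+* R) (V : Rˣ)
    (h : σ ↑V = ↑V) : σ ↑V⁻¹ = ↑V⁻¹ := by
  have h1 : σ ↑V⁻¹ * ↑V = 1 := by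
    rw [← h, ← map_mul]; simp
  calc σ ↑V⁻¹ = σ ↑V⁻¹ * (↑V * ↑V⁻¹) := by simp
    _ = (σ ↑V⁻¹ * ↑V) * ↑V⁻¹ := by rw [mul_assoc]
    _ = ↑V⁻¹ := by rw [h1, one_mul]

private lemma aux_inv_central {R : Type*} [Ring R] (z : Rˣ)
    (h : ∀ r : R, ↑z * r = r * ↑z) : ∀ r : R, ↑z⁻¹ * r = r * ↑z⁻¹ := by
  intro r
  calc (↑z⁻¹ : R) * r = ↑z⁻¹ * r * (↑z * ↑z⁻¹) := by rw [z.mul_inv, mul_one]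
    _ = ↑z⁻¹ * (r * ↑z) * ↑z⁻¹ := by simp only [mul_assoc]
    _ = ↑z⁻¹ * (↑z * r) * ↑z⁻¹ := by rw [h]
    _ = r * ↑z⁻¹ := by simp only [← mul_assoc]; rw [z.inv_mul, one_mul]

/-- Let `(R, m)` be a local Frobenius `k`-algebra with `R/m ≅ k` (encoded via
`ε : R →ₐ[k] k` with units exactly the elements outside `m = ker ε`), with
nondegenerate associative form `B` whose Nakayama automorphism `σ` satisfies
`σⁿ = I_a` for a unit `a`, and suppose `char k ∤ n`.  Then there is a unit `u` such
that the form `B' r s := B r (s * u)` has Nakayama automorphism `σ' = I_u ∘ σ`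
satisfying `(σ')ⁿ = Id`. -/
theorem stmt15 (k : Type*) [Field k]
    (R : Type*) [Ring R] [Algebra k R] [FiniteDimensional k R]
    (ε : R →ₐ[k] k) (hlocal : ∀ y : R, IsUnit y ↔ ε y ≠ 0)
    (B : LinearMap.BilinForm k R) (hnd : B.Nondegenerate)
    (hassoc : ∀ r s t : R, B (r * s) t = B r (s * t))
    (σ : R ≃ₐ[k] R) (hσ : ∀ r s : R, B r s = B s (σ r))
    (n : ℕ) (a : Rˣ)
    (hn : ∀ r : R, (⇑σ)^[n] r = ↑a * r * ↑a⁻¹)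
    (hchar : (n : k) ≠ 0) :
    ∃ u : Rˣ,
      (∀ r s : R, B r (s * ↑u) = B s ((↑u * σ r * ↑u⁻¹) * ↑u)) ∧
      (∀ r : R, (fun x => ↑u * σ x * ↑u⁻¹)^[n] r = r) := by
  classical
  have hn0 : n ≠ 0 := fun h => hchar (by simp [h])
  obtain ⟨m, hmn⟩ : ∃ m, n = m + 1 :=
    ⟨n - 1, (Nat.succ_pred_eq_of_pos (Nat.pos_of_ne_zero hn0)).symm⟩
  subst hmn
  have key0 : ∀ x : R, ε x = 0 → IsNilpotent x := aux_nilpotent ε hlocal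
  -- ε is σ-invariant
  have hεσ : ∀ r : R, ε (σ r) = ε r := by
    intro r
    have h1 : ε (r - algebraMap k R (ε r)) = 0 := by simp
    have h2 : IsNilpotent (σ (r - algebraMap k R (ε r))) := (key0 _ h1).map σ.toAlgHom
    have h3 : IsNilpotent (ε (σ (r - algebraMap k R (ε r)))) := h2.map ε
    have h4 : ε (σ (r - algebraMap k R (ε r))) = 0 := h3.eq_zero
    rw [map_sub, AlgEquiv.commutes, map_sub, AlgHom.commutes] at h4
    simp only [Algebra.algebraMap_self, RingHom.id_apply] at h4
    linear_combination h4
  set A : R := (a : R) with hA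
  set Ai : R := ((a⁻¹ : Rˣ) : R) with hAi
  have hAAi : A * Ai = 1 := a.mul_inv
  have hAiA : Ai * A = 1 := a.inv_mul
  set ζ : R := Ai * σ A with hζ
  have hσA : σ A = A * ζ := by
    rw [hζ, ← mul_assoc, hAAi, one_mul]
  -- commutation of σ with conjugation by a
  have hcomm : ∀ s : R, σ A * s * σ Ai = A * s * Ai := by
    intro s
    have h1 : (⇑σ)^[(m + 1) + 1] (σ.symm s) = σ ((⇑σ)^[m + 1] (σ.symm s)) :=
      Function.iterate_succ_apply' _ _ _
    have h2 : (⇑σ)^[(m + 1) + 1] (σ.symm s) = (⇑σ)^[m + 1] (σ (σ.symm s)) :=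
      Function.iterate_succ_apply _ _ _
    have h3 : (⇑σ)^[m + 1] (σ (σ.symm s)) = σ ((⇑σ)^[m + 1] (σ.symm s)) := by rw [← h2, h1]
    rw [hn, hn, AlgEquiv.apply_symm_apply] at h3
    rw [map_mul, map_mul, AlgEquiv.apply_symm_apply] at h3
    exact h3.symm
  have hσAAi : σ A * σ Ai = 1 := by rw [← map_mul, hAAi, map_one]
  have hσAiA : σ Ai * σ A = 1 := by rw [← map_mul, hAiA, map_one]
  have hσAs : ∀ s : R, σ A * s = A * s * ζ := by
    intro s
    have h2 : σ A * s * σ Ai * σ A = A * s * Ai * σ A := by rw [hcomm]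
    simp only [mul_assoc] at h2
    rw [hσAiA, mul_one] at h2
    rw [h2, hζ]
    simp only [mul_assoc]
  have hζcen : ∀ r : R, ζ * r = r * ζ := by
    intro r
    have h2 : Ai * (σ A * r) = Ai * (A * r * ζ) := by rw [hσAs]
    simp only [← mul_assoc] at h2
    rw [hAiA, one_mul] at h2
    rw [hζ] at h2 ⊢
    exact h2
  -- center machinery
  set C : Subalgebra k R := Subalgebra.center k R with hC
  have hζC : ζ ∈ C := Subalgebra.mem_center_iff.2 (fun b => (hζcen b).symm)
  have hσC : ∀ x : R, x ∈ C → σ x ∈ C := by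
    intro x hx
    refine Subalgebra.mem_center_iff.2 (fun b => ?_)
    have hx' : ∀ r : R, r * x = x * r := Subalgebra.mem_center_iff.1 hx
    calc b * σ x = σ (σ.symm b) * σ x := by rw [AlgEquiv.apply_symm_apply]
      _ = σ (σ.symm b * x) := by rw [map_mul]
      _ = σ (x * σ.symm b) := by rw [hx']
      _ = σ x * b := by rw [map_mul, AlgEquiv.apply_symm_apply]
  let σC : C →ₐ[k] C :=
    { toFun := fun x => ⟨σ (x : R), hσC _ x.2⟩
      map_one' := Subtype.ext (by simp)
      map_mul' := fun x y => Subtype.ext (by simp)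
      map_zero' := Subtype.ext (by simp)
      map_add' := fun x y => Subtype.ext (by simp)
      commutes' := fun t => Subtype.ext (by simp [Algebra.algebraMap_eq_smul_one]) }
  have hσCcoe : ∀ x : C, ((σC x : C) : R) = σ (x : R) := fun x => rfl
  have hit : ∀ (i : ℕ) (x : C), (((⇑σC)^[i] x : C) : R) = (⇑σ)^[i] (x : R) := by
    intro i
    induction i with
    | zero => intro x; simp
    | succ i ih =>
      intro x
      rw [Function.iterate_succ_apply', Function.iterate_succ_apply', hσCcoe, ih]
  set ζc : C := ⟨ζ, hζC⟩ with hζc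
  set L : ℕ → C := fun j => (⇑σC)^[j] ζc with hL
  have hσL : ∀ j, σC (L j) = L (j + 1) := by
    intro j
    rw [hL]
    exact (Function.iterate_succ_apply' _ _ _).symm
  -- telescoping
  have hTel : ∀ i : ℕ, (⇑σ)^[i] A = A * ((∏ j ∈ Finset.range i, L j : C) : R) := by
    intro i
    induction i with
    | zero => simp
    | succ i ih =>
      rw [Function.iterate_succ_apply', ih, map_mul]
      have h1 : σ ((∏ j ∈ Finset.range i, L j : C) : R)
          = ((∏ j ∈ Finset.range i, L (j + 1) : C) : R) := by
        rw [← hσCcoe, map_prod]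
        congr 1
        exact Finset.prod_congr rfl (fun j _ => hσL j)
      rw [h1, hσA]
      have h2 : (∏ j ∈ Finset.range (i + 1), L j) = ζc * ∏ j ∈ Finset.range i, L (j + 1) := by
        rw [Finset.prod_range_succ']
        rw [mul_comm]
        congr 1
      push_cast [h2]
      rw [mul_assoc]
  have hσnA : (⇑σ)^[m + 1] A = A := by
    rw [hn]
    calc A * A * Ai = A * (A * Ai) := by rw [mul_assoc]
      _ = A := by rw [hAAi, mul_one]
  have hNζ : (∏ j ∈ Finset.range (m + 1), L j) = 1 := by
    have h1 : A * ((∏ j ∈ Finset.range (m + 1), L j : C) : R) = A * ((1 : C) : R) := by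
      rw [← hTel, hσnA]; simp
    have h2 : Ai * (A * ((∏ j ∈ Finset.range (m + 1), L j : C) : R))
        = Ai * (A * ((1 : C) : R)) := by rw [h1]
    simp only [← mul_assoc, hAiA, one_mul] at h2
    exact Subtype.ext (by exact_mod_cast h2)
  -- the H90 construction
  set c₀ : C := ∏ j ∈ Finset.range (m + 1), (L j) ^ (m - j) with hc₀
  have hL0 : L 0 = ζc := rfl
  have key3 : σC c₀ = ∏ j ∈ Finset.range m, (L (j + 1)) ^ (m - j) := by
    rw [hc₀, map_prod]
    have h1 : ∀ j ∈ Finset.range (m + 1), σC ((L j) ^ (m - j)) = (L (j + 1)) ^ (m - j) := by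
      intro j _; rw [map_pow, hσL]
    rw [Finset.prod_congr rfl h1, Finset.prod_range_succ]
    simp
  have key1 : c₀ * ∏ j ∈ Finset.range (m + 1), L j
      = ∏ j ∈ Finset.range (m + 1), (L j) ^ (m - j + 1) := by
    rw [hc₀, ← Finset.prod_mul_distrib]
    exact Finset.prod_congr rfl (fun j _ => (pow_succ _ _).symm)
  have key2 : ∏ j ∈ Finset.range (m + 1), (L j) ^ (m - j + 1)
      = (∏ j ∈ Finset.range m, (L (j + 1)) ^ (m - j)) * (L 0) ^ (m + 1) := by
    rw [Finset.prod_range_succ', Nat.sub_zero]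
    congr 1
    refine Finset.prod_congr rfl (fun j hj => ?_)
    have hjm : j < m := Finset.mem_range.1 hj
    congr 1
    omega
  have h90 : σC c₀ * ζc ^ (m + 1) = c₀ := by
    calc σC c₀ * ζc ^ (m + 1)
        = (∏ j ∈ Finset.range m, (L (j + 1)) ^ (m - j)) * (L 0) ^ (m + 1) := by
          rw [key3, hL0]
      _ = ∏ j ∈ Finset.range (m + 1), (L j) ^ (m - j + 1) := key2.symm
      _ = c₀ * ∏ j ∈ Finset.range (m + 1), L j := key1.symm
      _ = c₀ := by rw [hNζ, mul_one]
  -- ε-values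
  set εC : C →ₐ[k] k := ε.comp C.val with hεC
  have hεζc : εC ζc = 1 := by
    show ε ζ = 1
    rw [hζ, map_mul, hεσ, ← map_mul, hAiA, map_one]
  have hεσC : ∀ x : C, εC (σC x) = εC x := fun x => hεσ (x : R)
  have hεL : ∀ j, εC (L j) = 1 := by
    intro j
    induction j with
    | zero => exact hεζc
    | succ j ih => rw [← hσL, hεσC]; exact ih
  have hεc₀ : εC c₀ = 1 := by
    rw [hc₀, map_prod]
    refine Finset.prod_eq_one (fun j _ => ?_)
    rw [map_pow, hεL, one_pow]
  have nilC : ∀ x : C, εC x = 0 → IsNilpotent x := by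
    intro x hx
    obtain ⟨e, he⟩ := key0 (x : R) hx
    exact ⟨e, Subtype.ext (by push_cast; exact he)⟩
  -- n-th root of c₀ in the center
  set s₀ : C := c₀ - 1 with hs₀def
  have hεs₀ : εC s₀ = 0 := by rw [hs₀def, map_sub, hεc₀, map_one, sub_self]
  obtain ⟨e₀, he₀⟩ := nilC s₀ hεs₀
  obtain ⟨P₀, hP₀c, g₀, hg₀⟩ := aux_polyroot k hchar e₀
  set c : C := Polynomial.aeval s₀ P₀ with hcdef
  have hs₀pow : s₀ ^ (e₀ + 1) = 0 := by rw [pow_succ, he₀, zero_mul]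
  have hcn : c ^ (m + 1) = c₀ := by
    have hP : P₀ ^ (m + 1) = (1 + Polynomial.X) + Polynomial.X ^ (e₀ + 1) * g₀ := by
      linear_combination hg₀
    calc c ^ (m + 1) = Polynomial.aeval s₀ (P₀ ^ (m + 1)) := by rw [hcdef, map_pow]
      _ = 1 + s₀ + s₀ ^ (e₀ + 1) * Polynomial.aeval s₀ g₀ := by
          rw [hP]; simp
      _ = c₀ := by rw [hs₀pow, zero_mul, add_zero, hs₀def]; abel
  have hεc : εC c = 1 := by
    rw [hcdef, ← Polynomial.aeval_algHom_apply εC s₀ P₀, hεs₀, Polynomial.aeval_def,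
      Polynomial.eval₂_at_zero]
    simpa using hP₀c
  -- the inverse of ζ in the center
  have hζξR : ζ * (σ Ai * A) = 1 := by
    calc ζ * (σ Ai * A) = Ai * (σ A * σ Ai) * A := by rw [hζ]; simp only [mul_assoc]
      _ = 1 := by rw [hσAAi, mul_one, hAiA]
  have hξζR : (σ Ai * A) * ζ = 1 := by
    calc (σ Ai * A) * ζ = σ Ai * (A * Ai) * σ A := by rw [hζ]; simp only [mul_assoc]
      _ = 1 := by rw [hAAi, mul_one, hσAiA]
  have hξC : (σ Ai * A) ∈ C := by
    have hζu : Rˣ := ⟨ζ, σ Ai * A, hζξR, hξζR⟩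
    refine Subalgebra.mem_center_iff.2 (fun b => ?_)
    exact (aux_inv_central ⟨ζ, σ Ai * A, hζξR, hξζR⟩ hζcen b).symm
  set ξ : C := ⟨σ Ai * A, hξC⟩ with hξdef
  have hζcξ : ζc * ξ = 1 := Subtype.ext hζξR
  set v : C := c * ξ with hvdef
  have hεξ : εC ξ = 1 := by
    show ε (σ Ai * A) = 1
    rw [map_mul, hεσ, ← map_mul, hAiA, map_one]
  have hεv : εC v = 1 := by rw [hvdef, map_mul, hεc, hεξ, one_mul]
  have hnil1 : IsNilpotent (σC c - 1) := by
    refine nilC _ ?_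
    rw [map_sub, hεσC, hεc, map_one, sub_self]
  have hnilv : IsNilpotent (v - 1) := by
    refine nilC _ ?_
    rw [map_sub, hεv, map_one, sub_self]
  have hdnil : IsNilpotent (σC c - v) := by
    have h1 := (Commute.all (σC c - 1) (v - 1)).isNilpotent_sub hnil1 hnilv
    have h2 : (σC c - 1) - (v - 1) = σC c - v := by abel
    rwa [h2] at h1
  have hvu : IsUnit v := by
    have h1 := hnilv.isUnit_one_add
    have h2 : (1 : C) + (v - 1) = v := by abel
    rwa [h2] at h1
  have hnu : IsUnit ((m + 1 : ℕ) : C) := by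
    have h1 : IsUnit ((m + 1 : ℕ) : k) := isUnit_iff_ne_zero.2 hchar
    have h2 := h1.map (algebraMap k C)
    rwa [map_natCast] at h2
  have hpow : (σC c) ^ (m + 1) = v ^ (m + 1) := by
    have h1 : (σC c) ^ (m + 1) = σC c₀ := by rw [← map_pow, hcn]
    have h3 : σC c₀ = c₀ * ξ ^ (m + 1) := by
      have h4 : σC c₀ * (ζc ^ (m + 1) * ξ ^ (m + 1)) = c₀ * ξ ^ (m + 1) := by
        rw [← mul_assoc, h90]
      rwa [← mul_pow, hζcξ, one_pow, mul_one] at h4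
    rw [h1, h3, hvdef, mul_pow, hcn]
  have hceq : σC c = v := aux_root_unique hnu hvu hdnil hpow (Nat.succ_ne_zero m)
  -- back in R
  have hσcR : σ (c : R) = (c : R) * (σ Ai * A) := congrArg Subtype.val hceq
  have hζσc : ζ * σ (c : R) = (c : R) := by
    rw [hσcR, ← mul_assoc, hζcen (c : R), mul_assoc, hζξR, mul_one]
  -- build the unit u
  have hcuIs : IsUnit (c : R) := (hlocal _).2 (by rw [show ε (c : R) = εC c from rfl, hεc]; exact one_ne_zero)
  set cu : Rˣ := hcuIs.unit with hcudef
  have hcu : (cu : R) = (c : R) := hcuIs.unit_spec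
  set au : Rˣ := a * cu with haudef
  have hauc : (au : R) = A * (c : R) := by rw [haudef, Units.val_mul, hcu]
  have hσau : σ (au : R) = (au : R) := by
    rw [hauc, map_mul, hσA, mul_assoc, hζσc]
  have invfix : ∀ V : Rˣ, σ (V : R) = (V : R) →
      σ ((V⁻¹ : Rˣ) : R) = ((V⁻¹ : Rˣ) : R) := by
    intro V h
    have h1 : σ ((V⁻¹ : Rˣ) : R) * (V : R) = 1 := by
      rw [← h, ← map_mul]; simp
    calc σ ((V⁻¹ : Rˣ) : R) = σ ((V⁻¹ : Rˣ) : R) * ((V : R) * ((V⁻¹ : Rˣ) : R)) := by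
          rw [V.mul_inv, mul_one]
      _ = (σ ((V⁻¹ : Rˣ) : R) * (V : R)) * ((V⁻¹ : Rˣ) : R) := by rw [mul_assoc]
      _ = ((V⁻¹ : Rˣ) : R) := by rw [h1, one_mul]
  have hσaui : σ ((au⁻¹ : Rˣ) : R) = ((au⁻¹ : Rˣ) : R) := invfix au hσau
  set α : k := ε (au : R) with hαdef
  set x : R := α • ((au⁻¹ : Rˣ) : R) - 1 with hxdef
  have hεauaui : α * ε ((au⁻¹ : Rˣ) : R) = 1 := by
    rw [hαdef, ← map_mul, au.mul_inv, map_one]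
  have hεx : ε x = 0 := by
    rw [hxdef, map_sub, map_smul, map_one, smul_eq_mul, hεauaui, sub_self]
  have hσx : σ x = x := by
    rw [hxdef, map_sub, map_smul, map_one, hσaui]
  obtain ⟨e₁, he₁⟩ := key0 x hεx
  obtain ⟨P₁, hP₁c, g₁, hg₁⟩ := aux_polyroot k hchar e₁
  set u' : R := Polynomial.aeval x P₁ with hu'def
  have hxpow : x ^ (e₁ + 1) = 0 := by rw [pow_succ, he₁, zero_mul]
  have hu'n : u' ^ (m + 1) = 1 + x := by
    have hP : P₁ ^ (m + 1) = (1 + Polynomial.X) + Polynomial.X ^ (e₁ + 1) * g₁ := by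
      linear_combination hg₁
    calc u' ^ (m + 1) = Polynomial.aeval x (P₁ ^ (m + 1)) := by rw [hu'def, map_pow]
      _ = 1 + x + x ^ (e₁ + 1) * Polynomial.aeval x g₁ := by rw [hP]; simp
      _ = 1 + x := by rw [hxpow, zero_mul, add_zero]
  have hσu' : σ u' = u' := by
    have h1 := Polynomial.aeval_algHom_apply σ x P₁
    rw [hu'def, ← h1, hσx]
  have hεu' : ε u' = 1 := by
    rw [hu'def, ← Polynomial.aeval_algHom_apply ε x P₁, hεx, Polynomial.aeval_def,
      Polynomial.eval₂_at_zero]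
    simpa using hP₁c
  have hUIs : IsUnit u' := (hlocal _).2 (by rw [hεu']; exact one_ne_zero)
  set U : Rˣ := hUIs.unit with hUdef
  have hU : (U : R) = u' := hUIs.unit_spec
  refine ⟨U, ?_, ?_⟩
  · intro r s
    have h1 : (U : R) * σ r * ((U⁻¹ : Rˣ) : R) * (U : R) = (U : R) * σ r := by
      rw [mul_assoc, U.inv_mul, mul_one]
    rw [h1, hσ r (s * (U : R)), hassoc s (U : R) (σ r)]
  · intro r
    -- iterate formula
    have hσUp : ∀ i : ℕ, σ ((U ^ i : Rˣ) : R) = ((U ^ i : Rˣ) : R) := by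
      intro i
      rw [Units.val_pow_eq_pow_val, map_pow, hU, hσu']
    have hiter : ∀ (i : ℕ) (r : R),
        (fun y => (U : R) * σ y * ((U⁻¹ : Rˣ) : R))^[i] r
          = ((U ^ i : Rˣ) : R) * (⇑σ)^[i] r * (((U ^ i)⁻¹ : Rˣ) : R) := by
      intro i
      induction i with
      | zero => intro r; simp
      | succ i ih =>
        intro r
        rw [Function.iterate_succ_apply', ih r]
        rw [map_mul, map_mul, hσUp i, invfix (U ^ i) (hσUp i),
          Function.iterate_succ_apply']
        have hp1 : (U ^ (i + 1) : Rˣ) = U * U ^ i := by rw [pow_succ']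
        rw [hp1, mul_inv_rev, Units.val_mul, Units.val_mul]
        simp only [mul_assoc]
    rw [hiter (m + 1) r, hn r]
    -- now: ↑(U^(m+1)) * (A * r * Ai) * ↑(U^(m+1))⁻¹ = r
    have hUn : ((U ^ (m + 1) : Rˣ) : R) = α • ((au⁻¹ : Rˣ) : R) := by
      rw [Units.val_pow_eq_pow_val, hU, hu'n, hxdef, add_comm, sub_add_cancel]
    set W : Rˣ := U ^ (m + 1) * a with hWdef
    have hWv : (W : R) = α • ((cu⁻¹ : Rˣ) : R) := by
      rw [hWdef, Units.val_mul, hUn, haudef, mul_inv_rev, Units.val_mul, smul_mul_assoc,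
        mul_assoc]
      rw [show ((a⁻¹ : Rˣ) : R) * (a : R) = 1 from a.inv_mul, mul_one]
    have hcuicen : ∀ t : R, ((cu⁻¹ : Rˣ) : R) * t = t * ((cu⁻¹ : Rˣ) : R) := by
      refine aux_inv_central cu (fun t => ?_)
      rw [hcu]
      exact (Subalgebra.mem_center_iff.1 c.2 t).symm
    have hWcen : ∀ t : R, (W : R) * t = t * (W : R) := by
      intro t
      rw [hWv, smul_mul_assoc, hcuicen, mul_smul_comm]
    have hfin : ((U ^ (m + 1) : Rˣ) : R) * (A * r * Ai) * (((U ^ (m + 1))⁻¹ : Rˣ) : R)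
        = (W : R) * r * ((W⁻¹ : Rˣ) : R) := by
      rw [hWdef, mul_inv_rev, Units.val_mul, Units.val_mul]
      simp only [mul_assoc]
      rfl
    rw [hfin, hWcen r, mul_assoc, W.mul_inv, mul_one]
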